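/- Let N = {1,…,n} with true qualities q ∈ [1/2,1]^n, and for each worker i let k_i be a Binomial(m_i, q_i) random variable (the number of correct answers in m_i assigned tasks), with k_1, …, k_n independent. Fix μ ∈ (0,1) and set q̂_i = k_i/m_i, q̂⁺_i = q̂_i + √(ln(2n/μ)/(2m_i)), q̂⁻_i = q̂_i − √(ln(2n/μ)/(2m_i)). Let f assign to each S ⊆ N and q' ∈ ℝ^n a value f_S(q'), satisfying bounded smoothness with strictly increasing continuous h. Let α ∈ ℝ, Δ > 0 be such that |f_S(q) − α| > Δ for all S ⊆ N, let δ > 0 satisfy h(δ) ≤ Δ, and suppose m_i ≥ (2/δ²) ln(2n/μ) for all i. Then with probability at least 1 − μ the following hold simultaneously: (1) for every S ⊆ N with f_S(q) > α, one has f_S(q̂⁺) > α; and (2) for every S ⊆ N with f_S(q) < α, one has f_S(q̂⁻) < α. -/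

import Mathlib

open MeasureTheory ProbabilityTheory

lemma bern_mgf (p : ℝ) (hp0 : 0 ≤ p) (hp1 : p ≤ 1) (t : ℝ) :
    1 - p + p * Real.exp t ≤ Real.exp (p * t + t ^ 2 / 8) := by
  have hDpos : ∀ s : ℝ, 0 < 1 - p + p * Real.exp s := by
    intro s
    rcases eq_or_lt_of_le hp0 with hh | hh
    · simp [← hh]
    · have := Real.exp_pos s; nlinarith
  set g : ℝ → ℝ := fun t => p * t + t ^ 2 / 8 - Real.log (1 - p + p * Real.exp t) with hg
  set g1 : ℝ → ℝ := fun s => p + s / 4 - p * Real.exp s / (1 - p + p * Real.exp s) with hg1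
  have hD : ∀ s : ℝ, HasDerivAt (fun t => 1 - p + p * Real.exp t) (p * Real.exp s) s := by
    intro s
    simpa using ((Real.hasDerivAt_exp s).const_mul p).const_add (1 - p)
  have hgd : ∀ s, HasDerivAt g (g1 s) s := by
    intro s
    have hlog := (hD s).log (hDpos s).ne'
    have h1 : HasDerivAt (fun t : ℝ => p * t + t ^ 2 / 8) (p + s / 4) s := by
      have := ((hasDerivAt_id s).const_mul p).add ((hasDerivAt_pow 2 s).div_const 8)
      refine this.congr_deriv ?_
      simp; ring
    exact h1.sub hlog
  have hg1d : ∀ s, HasDerivAt g1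
      (1 / 4 - p * Real.exp s * (1 - p) / (1 - p + p * Real.exp s) ^ 2) s := by
    intro s
    have hN : HasDerivAt (fun t : ℝ => p * Real.exp t) (p * Real.exp s) s :=
      (Real.hasDerivAt_exp s).const_mul p
    have hq := hN.div (hD s) (hDpos s).ne'
    have h1 : HasDerivAt (fun t : ℝ => p + t / 4) (1 / 4) s := by
      simpa using ((hasDerivAt_id s).div_const 4).const_add p
    have h2 := h1.sub hq
    refine h2.congr_deriv ?_
    have := (hDpos s).ne'
    field_simp
    ring
  have hg1mono : Monotone g1 := by
    apply monotone_of_deriv_nonneg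
    · exact fun s => (hg1d s).differentiableAt
    · intro s
      rw [(hg1d s).deriv]
      have hD' := hDpos s
      have he := Real.exp_pos s
      have hle : p * Real.exp s * (1 - p) / (1 - p + p * Real.exp s) ^ 2 ≤ 1 / 4 := by
        rw [div_le_iff₀ (by positivity)]
        nlinarith [sq_nonneg (1 - p - p * Real.exp s)]
      linarith
  have hg10 : g1 0 = 0 := by simp [hg1]
  have hgnn : ∀ s, 0 ≤ g s := by
    intro s
    have hg0 : g 0 = 0 := by simp [hg]
    rcases le_total 0 s with hs | hs
    · have hmono : MonotoneOn g (Set.Ici (0:ℝ)) := by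
        apply monotoneOn_of_deriv_nonneg (convex_Ici 0)
        · exact (Differentiable.continuous (fun x => (hgd x).differentiableAt)).continuousOn
        · exact fun x _ => (hgd x).differentiableAt.differentiableWithinAt
        · intro x hx
          rw [(hgd x).deriv]
          rw [interior_Ici] at hx
          have := hg1mono (le_of_lt hx)
          rw [hg10] at this
          exact this
      have := hmono (Set.self_mem_Ici) hs hs
      rwa [hg0] at this
    · have hanti : AntitoneOn g (Set.Iic (0:ℝ)) := by
        apply antitoneOn_of_deriv_nonpos (convex_Iic 0)
        · exact (Differentiable.continuous (fun x => (hgd x).differentiableAt)).continuousOn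
        · exact fun x _ => (hgd x).differentiableAt.differentiableWithinAt
        · intro x hx
          rw [(hgd x).deriv]
          rw [interior_Iic] at hx
          have := hg1mono (le_of_lt hx)
          rw [hg10] at this
          exact this
      have := hanti hs Set.self_mem_Iic hs
      rwa [hg0] at this
  have := hgnn t
  have hlog : Real.log (1 - p + p * Real.exp t) ≤ p * t + t ^ 2 / 8 := by
    simp only [hg] at this; linarith
  calc 1 - p + p * Real.exp t = Real.exp (Real.log (1 - p + p * Real.exp t)) :=
        (Real.exp_log (hDpos t)).symm
    _ ≤ _ := Real.exp_le_exp.mpr hlog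

lemma binom_chernoff (M : ℕ) (p s t a : ℝ) (hp0 : 0 ≤ p) (hp1 : p ≤ 1)
    (cond : ℕ → Prop) [DecidablePred cond]
    (hcond : ∀ j : ℕ, cond j → 0 ≤ t * ((j : ℝ) - a))
    (hsum : -(t * a) + M * (p * t + t ^ 2 / 8) ≤ -2 * M * s ^ 2) :
    ∑ j ∈ Finset.range (M + 1),
      (if cond j then (M.choose j : ℝ) * p ^ j * (1 - p) ^ (M - j) else 0)
    ≤ Real.exp (-2 * M * s ^ 2) := by
  have h1p : (0:ℝ) ≤ 1 - p := by linarith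
  have step1 : ∀ j ∈ Finset.range (M + 1),
      (if cond j then (M.choose j : ℝ) * p ^ j * (1 - p) ^ (M - j) else 0)
      ≤ Real.exp (-(t * a)) *
          ((M.choose j : ℝ) * (p * Real.exp t) ^ j * (1 - p) ^ (M - j)) := by
    intro j _
    have hnn : 0 ≤ (M.choose j : ℝ) * p ^ j * (1 - p) ^ (M - j) := by positivity
    have hexp : Real.exp (-(t * a)) *
        ((M.choose j : ℝ) * (p * Real.exp t) ^ j * (1 - p) ^ (M - j))
        = (M.choose j : ℝ) * p ^ j * (1 - p) ^ (M - j) * Real.exp (t * ((j : ℝ) - a)) := by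
      rw [mul_pow, ← Real.exp_nat_mul,
        show t * ((j:ℝ) - a) = (j : ℝ) * t + -(t * a) by ring, Real.exp_add]
      ring
    rw [hexp]
    split_ifs with hc
    · nth_rewrite 1 [← mul_one ((M.choose j : ℝ) * p ^ j * (1 - p) ^ (M - j))]
      exact mul_le_mul_of_nonneg_left (Real.one_le_exp (hcond j hc)) hnn
    · positivity
  calc ∑ j ∈ Finset.range (M + 1),
      (if cond j then (M.choose j : ℝ) * p ^ j * (1 - p) ^ (M - j) else 0)
      ≤ ∑ j ∈ Finset.range (M + 1), Real.exp (-(t * a)) *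
          ((M.choose j : ℝ) * (p * Real.exp t) ^ j * (1 - p) ^ (M - j)) :=
        Finset.sum_le_sum step1
    _ = Real.exp (-(t * a)) * (p * Real.exp t + (1 - p)) ^ M := by
        rw [← Finset.mul_sum, add_pow]
        congr 1
        apply Finset.sum_congr rfl
        intro j _
        ring
    _ ≤ Real.exp (-(t * a)) * (Real.exp (p * t + t ^ 2 / 8)) ^ M := by
        apply mul_le_mul_of_nonneg_left _ (Real.exp_pos _).le
        apply pow_le_pow_left₀ (by positivity)
        have := bern_mgf p hp0 hp1 t
        linarith
    _ = Real.exp (-(t * a) + M * (p * t + t ^ 2 / 8)) := by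
        rw [← Real.exp_nat_mul, ← Real.exp_add]
    _ ≤ Real.exp (-2 * M * s ^ 2) := Real.exp_le_exp.mpr hsum

lemma binom_upper_tail (M : ℕ) (p s : ℝ) (hp0 : 0 ≤ p) (hp1 : p ≤ 1) (hs : 0 ≤ s) :
    ∑ j ∈ Finset.range (M + 1),
      (if (M : ℝ) * (p + s) ≤ j then (M.choose j : ℝ) * p ^ j * (1 - p) ^ (M - j) else 0)
    ≤ Real.exp (-2 * M * s ^ 2) := by
  apply binom_chernoff M p s (4 * s) ((M : ℝ) * (p + s)) hp0 hp1
  · intro j hc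
    have : (0:ℝ) ≤ 4 * s := by positivity
    nlinarith
  · nlinarith [sq_nonneg s]

lemma binom_lower_tail (M : ℕ) (p s : ℝ) (hp0 : 0 ≤ p) (hp1 : p ≤ 1) (hs : 0 ≤ s) :
    ∑ j ∈ Finset.range (M + 1),
      (if (j : ℝ) ≤ (M : ℝ) * (p - s) then (M.choose j : ℝ) * p ^ j * (1 - p) ^ (M - j) else 0)
    ≤ Real.exp (-2 * M * s ^ 2) := by
  apply binom_chernoff M p s (-(4 * s)) ((M : ℝ) * (p - s)) hp0 hp1
  · intro j hc
    nlinarith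
  · nlinarith [sq_nonneg s]

open MeasureTheory

lemma worker_bound {Ω : Type*} [MeasurableSpace Ω] (P : Measure Ω)
    (M : ℕ) (hM : 0 < M) (p s : ℝ) (hp0 : 0 ≤ p) (hp1 : p ≤ 1) (hs : 0 ≤ s)
    (k : Ω → ℕ)
    (hbin : ∀ j, P {ω | k ω = j} =
      ENNReal.ofReal ((M.choose j : ℝ) * p ^ j * (1 - p) ^ (M - j))) :
    P {ω | ¬ |(k ω : ℝ) / M - p| ≤ s} ≤ ENNReal.ofReal (2 * Real.exp (-2 * M * s ^ 2)) := by
  classical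
  set pmf : ℕ → ℝ := fun j => (M.choose j : ℝ) * p ^ j * (1 - p) ^ (M - j) with hpmf
  have hpmfnn : ∀ j, 0 ≤ pmf j := by
    intro j
    have : (0:ℝ) ≤ 1 - p := by linarith
    positivity
  set cond : ℕ → Prop := fun j => ¬ |(j : ℝ) / M - p| ≤ s with hcond
  have hsub : {ω | ¬ |(k ω : ℝ) / M - p| ≤ s} ⊆
      ⋃ j : ℕ, {ω | k ω = j ∧ cond j} := by
    intro ω hω
    exact Set.mem_iUnion.mpr ⟨k ω, rfl, hω⟩
  refine le_trans (le_trans (measure_mono hsub) (measure_iUnion_le _)) ?_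
  have hterm : ∀ j : ℕ, P {ω | k ω = j ∧ cond j}
      ≤ if cond j then ENNReal.ofReal (pmf j) else 0 := by
    intro j
    by_cases hc : cond j
    · rw [if_pos hc, ← hbin j]
      exact measure_mono (fun ω hω => hω.1)
    · rw [if_neg hc]
      have hempty : {ω | k ω = j ∧ cond j} = ∅ := by
        ext ω; simp [hc]
      simp [hempty]
  refine le_trans (ENNReal.tsum_le_tsum hterm) ?_
  have hzero : ∀ j ∉ Finset.range (M + 1),
      (if cond j then ENNReal.ofReal (pmf j) else 0) = 0 := by
    intro j hj
    rw [Finset.mem_range, Nat.lt_succ_iff, not_le] at hj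
    have hp0' : pmf j = 0 := by
      simp [hpmf, Nat.choose_eq_zero_of_lt hj]
    simp [hp0']
  rw [tsum_eq_sum hzero]
  have hsum : ∑ j ∈ Finset.range (M + 1), (if cond j then ENNReal.ofReal (pmf j) else 0)
      = ENNReal.ofReal (∑ j ∈ Finset.range (M + 1), if cond j then pmf j else 0) := by
    rw [ENNReal.ofReal_sum_of_nonneg]
    · apply Finset.sum_congr rfl
      intro j _
      split_ifs <;> simp
    · intro j _
      split_ifs with hc
      · exact hpmfnn j
      · exact le_rfl
  rw [hsum]
  apply ENNReal.ofReal_le_ofReal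
  have hMpos : (0:ℝ) < M := by exact_mod_cast hM
  have hsplit : ∀ j ∈ Finset.range (M + 1), (if cond j then pmf j else 0) ≤
      (if (M:ℝ) * (p + s) ≤ j then pmf j else 0)
      + (if (j:ℝ) ≤ (M:ℝ) * (p - s) then pmf j else 0) := by
    intro j _
    have hnn1 : 0 ≤ (if (M:ℝ) * (p + s) ≤ (j:ℝ) then pmf j else 0) := by
      split_ifs; exacts [hpmfnn j, le_rfl]
    have hnn2 : 0 ≤ (if (j:ℝ) ≤ (M:ℝ) * (p - s) then pmf j else 0) := by
      split_ifs; exacts [hpmfnn j, le_rfl]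
    by_cases hc : cond j
    · rw [if_pos hc]
      have hc' : s < |(j : ℝ) / M - p| := by
        simp only [hcond] at hc; push_neg at hc; exact hc
      rcases lt_abs.mp hc' with h1 | h1
      · have hj : (M:ℝ) * (p + s) ≤ j := by
          have h2 : p + s < (j:ℝ) / M := by linarith
          have := (lt_div_iff₀ hMpos).mp h2
          linarith
        rw [if_pos hj] at hnn1 ⊢
        linarith
      · have hj : (j:ℝ) ≤ (M:ℝ) * (p - s) := by
          have h2 : (j:ℝ) / M < p - s := by linarith
          have := (div_lt_iff₀ hMpos).mp h2
          linarith
        rw [if_pos hj] at hnn2 ⊢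
        linarith
    · rw [if_neg hc]
      linarith
  refine le_trans (Finset.sum_le_sum hsplit) ?_
  rw [Finset.sum_add_distrib]
  have h1 := binom_upper_tail M p s hp0 hp1 hs
  have h2 := binom_lower_tail M p s hp0 hp1 hs
  rw [hpmf]
  linarith

open MeasureTheory ProbabilityTheory

/-- With probability at least `1 − μ`, the upper confidence bounds `q̂⁺` classify as infeasible
every subset whose true error exceeds `α`, and the lower confidence bounds `q̂⁻` classify as
feasible every subset whose true error is below `α`, provided each worker `i` has been assigned
`m i ≥ (2/δ²) ln(2n/μ)` tasks, where `h δ ≤ Δ` and `q` is `Δ`-separated from `α`. -/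
theorem stmt_9 {Ω : Type*} [MeasurableSpace Ω] (P : Measure Ω) [IsProbabilityMeasure P]
    (n : ℕ) (hn : 1 ≤ n) (q : Fin n → ℝ) (hq : ∀ i, q i ∈ Set.Icc (1 / 2 : ℝ) 1)
    (m : Fin n → ℕ) (k : Fin n → Ω → ℕ)
    (hmeas : ∀ i, Measurable (k i))
    (hind : iIndepFun k P)
    (hbin : ∀ i j, P {ω | k i ω = j} =
      ENNReal.ofReal (((m i).choose j : ℝ) * q i ^ j * (1 - q i) ^ (m i - j)))
    (μ : ℝ) (hμ : μ ∈ Set.Ioo (0 : ℝ) 1)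
    (f : Finset (Fin n) → (Fin n → ℝ) → ℝ)
    (h : ℝ → ℝ) (hhmono : StrictMono h) (hhcont : Continuous h)
    (hbs : ∀ (S : Finset (Fin n)) (q₁ q₂ : Fin n → ℝ) (δ : ℝ),
      (∀ i, |q₁ i - q₂ i| ≤ δ) → |f S q₁ - f S q₂| ≤ h δ)
    (α Δ : ℝ) (hΔ : 0 < Δ)
    (hsep : ∀ S : Finset (Fin n), Δ < |f S q - α|)
    (δ : ℝ) (hδ : 0 < δ) (hhδ : h δ ≤ Δ)
    (hm : ∀ i, (2 / δ ^ 2) * Real.log (2 * n / μ) ≤ (m i : ℝ)) :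
    ENNReal.ofReal (1 - μ) ≤
      P {ω |
        (∀ S : Finset (Fin n), α < f S q →
          α < f S (fun i =>
            (k i ω : ℝ) / (m i) + Real.sqrt (Real.log (2 * n / μ) / (2 * m i)))) ∧
        (∀ S : Finset (Fin n), f S q < α →
          f S (fun i =>
            (k i ω : ℝ) / (m i) - Real.sqrt (Real.log (2 * n / μ) / (2 * m i))) < α)} := by
  obtain ⟨hμ0, hμ1⟩ := hμ
  set L : ℝ := Real.log (2 * n / μ) with hL
  have hnpos : (0:ℝ) < n := by exact_mod_cast hn
  have hLpos : 0 < L := by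
    apply Real.log_pos
    rw [lt_div_iff₀ hμ0]
    have hn1 : (1:ℝ) ≤ n := by exact_mod_cast hn
    nlinarith
  have hmpos : ∀ i, (0:ℝ) < m i := fun i =>
    lt_of_lt_of_le (by positivity) (hm i)
  have hmnat : ∀ i, 0 < m i := fun i => by exact_mod_cast hmpos i
  have h2L : ∀ i, 2 * L ≤ (m i : ℝ) * δ ^ 2 := by
    intro i
    have := hm i
    rw [div_mul_eq_mul_div, div_le_iff₀ (by positivity)] at this
    linarith
  -- the good event
  set good : Set Ω := {ω | ∀ i, |(k i ω : ℝ) / (m i) - q i| ≤ δ / 2} with hgood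
  -- probability of the bad event is at most μ
  have hbad : P goodᶜ ≤ ENNReal.ofReal μ := by
    have hsub : goodᶜ ⊆ ⋃ i : Fin n, {ω | ¬ |(k i ω : ℝ) / (m i) - q i| ≤ δ / 2} := by
      intro ω hω
      rw [hgood, Set.mem_compl_iff, Set.mem_setOf_eq, not_forall] at hω
      obtain ⟨i, hi⟩ := hω
      exact Set.mem_iUnion.mpr ⟨i, hi⟩
    refine le_trans (le_trans (measure_mono hsub) (measure_iUnion_le _)) ?_
    have hworker : ∀ i : Fin n, P {ω | ¬ |(k i ω : ℝ) / (m i) - q i| ≤ δ / 2}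
        ≤ ENNReal.ofReal (μ / n) := by
      intro i
      have hb := worker_bound P (m i) (hmnat i) (q i) (δ / 2)
        (le_trans (by norm_num) (hq i).1) (hq i).2 (by positivity) (k i) (hbin i)
      refine le_trans hb (ENNReal.ofReal_le_ofReal ?_)
      have hexp : Real.exp (-2 * (m i) * (δ / 2) ^ 2) ≤ Real.exp (-L) := by
        apply Real.exp_le_exp.mpr
        have := h2L i
        nlinarith
      have hexpL : Real.exp (-L) = μ / (2 * n) := by
        rw [hL, Real.exp_neg, Real.exp_log (by positivity), inv_div]
      calc 2 * Real.exp (-2 * (m i) * (δ / 2) ^ 2) ≤ 2 * Real.exp (-L) := by linarith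
        _ = μ / n := by rw [hexpL]; field_simp
    calc ∑' i : Fin n, P {ω | ¬ |(k i ω : ℝ) / (m i) - q i| ≤ δ / 2}
        ≤ ∑' _ : Fin n, ENNReal.ofReal (μ / n) := ENNReal.tsum_le_tsum hworker
      _ = n * ENNReal.ofReal (μ / n) := by
          rw [tsum_fintype, Finset.sum_const, Finset.card_univ, Fintype.card_fin, nsmul_eq_mul]
      _ = ENNReal.ofReal μ := by
          rw [← ENNReal.ofReal_natCast n, ← ENNReal.ofReal_mul (by positivity)]
          congr 1
          field_simp
  -- good implies the target event
  have hdet : good ⊆ {ω |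
        (∀ S : Finset (Fin n), α < f S q →
          α < f S (fun i =>
            (k i ω : ℝ) / (m i) + Real.sqrt (Real.log (2 * n / μ) / (2 * m i)))) ∧
        (∀ S : Finset (Fin n), f S q < α →
          f S (fun i =>
            (k i ω : ℝ) / (m i) - Real.sqrt (Real.log (2 * n / μ) / (2 * m i))) < α)} := by
    intro ω hω
    rw [hgood, Set.mem_setOf_eq] at hω
    have heps : ∀ i, Real.sqrt (L / (2 * m i)) ≤ δ / 2 := by
      intro i
      have h1 : L / (2 * m i) ≤ (δ / 2) ^ 2 := by
        rw [div_le_iff₀ (by have := hmpos i; linarith)]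
        have := h2L i
        nlinarith
      calc Real.sqrt (L / (2 * m i)) ≤ Real.sqrt ((δ / 2) ^ 2) := Real.sqrt_le_sqrt h1
        _ = δ / 2 := Real.sqrt_sq (by positivity)
    have hepsnn : ∀ i, 0 ≤ Real.sqrt (L / (2 * m i)) := fun i => Real.sqrt_nonneg _
    constructor
    · intro S hS
      have hclose : ∀ i, |((k i ω : ℝ) / (m i) + Real.sqrt (L / (2 * m i))) - q i| ≤ δ := by
        intro i
        have h1 := hω i
        have h2 := heps i
        have h3 := hepsnn i
        rw [abs_le] at h1 ⊢
        constructor <;> linarith [h1.1, h1.2]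
      have hfb := hbs S (fun i => (k i ω : ℝ) / (m i) + Real.sqrt (L / (2 * m i))) q δ hclose
      have hsepS := hsep S
      rw [abs_of_pos (by linarith)] at hsepS
      rw [abs_le] at hfb
      have := hfb.1
      simp only [hL] at *
      linarith
    · intro S hS
      have hclose : ∀ i, |((k i ω : ℝ) / (m i) - Real.sqrt (L / (2 * m i))) - q i| ≤ δ := by
        intro i
        have h1 := hω i
        have h2 := heps i
        have h3 := hepsnn i
        rw [abs_le] at h1 ⊢
        constructor <;> linarith [h1.1, h1.2]
      have hfb := hbs S (fun i => (k i ω : ℝ) / (m i) - Real.sqrt (L / (2 * m i))) q δ hclose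
      have hsepS := hsep S
      rw [abs_of_neg (by linarith), neg_sub] at hsepS
      rw [abs_le] at hfb
      have := hfb.2
      simp only [hL] at *
      linarith
  -- combine
  have hfinal : ENNReal.ofReal (1 - μ) ≤ P good := by
    have h1 : (1 : ENNReal) ≤ P good + P goodᶜ := by
      have h0 : P (good ∪ goodᶜ) ≤ P good + P goodᶜ := measure_union_le good goodᶜ
      rw [Set.union_compl_self, measure_univ] at h0
      exact h0
    have h2 : (1 : ENNReal) ≤ P good + ENNReal.ofReal μ := le_trans h1 (by gcongr)
    rw [ENNReal.ofReal_sub _ (le_of_lt hμ0), ENNReal.ofReal_one]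
    exact tsub_le_iff_right.mpr h2
  exact le_trans hfinal (measure_mono hdet)
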